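/- Throw n balls independently and uniformly at random into ⌈n/(4 ln n)⌉ bins, where n ≥ 4. For any fixed bin, the probability that it contains exactly one ball is at most 1/n². Consequently, by a union bound over O(n) such slots, the probability that any slot in windows up to size n/(4 ln n) contains exactly one ball is O(1/n). -/

import Mathlib

open Finset

-- counting lemma: number of f with exactly one i mapping to j
lemma count_le (n m : ℕ) (j : Fin m) :
    ((Finset.univ.filter (fun f : Fin n → Fin m =>
        (Finset.univ.filter (fun i : Fin n => f i = j)).card = 1)).card : ℕ)
      ≤ n * (m * (m - 1) ^ (n - 1)) := by
  classical
  have hBi : ∀ i : Fin n,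
      (Finset.univ.filter (fun f : Fin n → Fin m => ∀ k, k ≠ i → f k ≠ j)).card
        = m * (m - 1) ^ (n - 1) := by
    intro i
    have heq : (Finset.univ.filter (fun f : Fin n → Fin m => ∀ k, k ≠ i → f k ≠ j))
        = Fintype.piFinset (fun k => if k = i then (Finset.univ : Finset (Fin m)) else {j}ᶜ) := by
      ext f
      simp only [Finset.mem_filter, Finset.mem_univ, true_and, Fintype.mem_piFinset]
      constructor
      · intro h k
        by_cases hk : k = i <;> simp [hk, h k]
      · intro h k hk
        have := h k
        simpa [hk] using this
    rw [heq, Fintype.card_piFinset]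
    rw [← Finset.mul_prod_erase Finset.univ
      (fun k => (if k = i then (Finset.univ : Finset (Fin m)) else {j}ᶜ).card)
      (Finset.mem_univ i)]
    have h1 : (if i = i then (Finset.univ : Finset (Fin m)) else {j}ᶜ).card = m := by
      simp
    have h2 : ∏ k ∈ Finset.univ.erase i,
        (if k = i then (Finset.univ : Finset (Fin m)) else {j}ᶜ).card
        = (m - 1) ^ (n - 1) := by
      rw [Finset.prod_congr rfl (fun k hk => by
        rw [if_neg (Finset.ne_of_mem_erase hk)]), Finset.prod_const]
      simp [Finset.card_erase_of_mem, Finset.card_compl]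
    rw [h1, h2]
  have hsub : (Finset.univ.filter (fun f : Fin n → Fin m =>
      (Finset.univ.filter (fun i : Fin n => f i = j)).card = 1))
      ⊆ Finset.univ.biUnion (fun i : Fin n =>
        Finset.univ.filter (fun f : Fin n → Fin m => ∀ k, k ≠ i → f k ≠ j)) := by
    intro f hf
    simp only [Finset.mem_filter, Finset.mem_univ, true_and] at hf
    obtain ⟨i, hi⟩ := Finset.card_eq_one.mp hf
    simp only [Finset.mem_biUnion, Finset.mem_univ, true_and, Finset.mem_filter]
    refine ⟨i, fun k hk hkj => hk ?_⟩
    have : k ∈ ({i} : Finset (Fin n)) := by rw [← hi]; simp [hkj]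
    simpa using this
  calc (Finset.univ.filter (fun f : Fin n → Fin m =>
      (Finset.univ.filter (fun i : Fin n => f i = j)).card = 1)).card
      ≤ (Finset.univ.biUnion (fun i : Fin n =>
        Finset.univ.filter (fun f : Fin n → Fin m => ∀ k, k ≠ i → f k ≠ j))).card :=
        Finset.card_le_card hsub
    _ ≤ ∑ i : Fin n, (Finset.univ.filter
        (fun f : Fin n → Fin m => ∀ k, k ≠ i → f k ≠ j)).card := Finset.card_biUnion_le
    _ = n * (m * (m - 1) ^ (n - 1)) := by
        simp [hBi, Finset.sum_const, Finset.card_univ]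

-- analytic lemma
lemma analytic (n m : ℕ) (hm : 1 ≤ m) (hn : 1 ≤ n)
    (h3 : 3 * (m : ℝ) * Real.log n ≤ (n : ℝ) - 1) :
    ((n * (m * (m - 1) ^ (n - 1)) : ℕ) : ℝ) / ((m ^ n : ℕ) : ℝ) ≤ 1 / (n : ℝ) ^ 2 := by
  have hmR : (1 : ℝ) ≤ (m : ℝ) := by exact_mod_cast hm
  have hm0 : (0 : ℝ) < m := by linarith
  have hnR : (1 : ℝ) ≤ (n : ℝ) := by exact_mod_cast hn
  have hn0 : (0 : ℝ) < n := by linarith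
  have hcast : ((n * (m * (m - 1) ^ (n - 1)) : ℕ) : ℝ)
      = n * ((m : ℝ) * ((m : ℝ) - 1) ^ (n - 1)) := by
    push_cast [Nat.cast_sub hm]
    ring
  have hpow : ((m ^ n : ℕ) : ℝ) = (m : ℝ) * (m : ℝ) ^ (n - 1) := by
    push_cast
    rw [← pow_succ']
    congr 1
    omega
  rw [hcast, hpow]
  set q : ℝ := ((m : ℝ) - 1) / m with hq
  have hq0 : 0 ≤ q := div_nonneg (by linarith) (le_of_lt hm0)
  have hexp : q ≤ Real.exp (-(1 / m)) := by
    have := Real.add_one_le_exp (-(1 / (m : ℝ)))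
    have hq' : q = 1 - 1 / m := by
      show ((m : ℝ) - 1) / m = 1 - 1 / m
      field_simp
    linarith [this, hq'.le, hq'.ge]
  have hqpow : q ^ (n - 1) ≤ Real.exp (-((n - 1 : ℕ) / (m : ℝ))) := by
    calc q ^ (n - 1) ≤ (Real.exp (-(1 / m))) ^ (n - 1) := pow_le_pow_left₀ hq0 hexp _
      _ = Real.exp (-((n - 1 : ℕ) / (m : ℝ))) := by
          rw [← Real.exp_nat_mul]
          congr 1
          field_simp
  have hnn1 : ((n - 1 : ℕ) : ℝ) = (n : ℝ) - 1 := by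
    push_cast [Nat.cast_sub hn]; ring
  have hexp3 : Real.exp (-((n - 1 : ℕ) / (m : ℝ))) ≤ Real.exp (-(3 * Real.log n)) := by
    apply Real.exp_le_exp.mpr
    rw [hnn1]
    rw [neg_le_neg_iff, le_div_iff₀ hm0]
    linarith
  have hexplog : Real.exp (-(3 * Real.log n)) = 1 / (n : ℝ) ^ 3 := by
    rw [show (3 : ℝ) * Real.log n = (3 : ℕ) * Real.log n by norm_num,
      Real.exp_neg, Real.exp_nat_mul, Real.exp_log hn0]
    norm_num
  have key : n * ((m : ℝ) * ((m : ℝ) - 1) ^ (n - 1)) / ((m : ℝ) * (m : ℝ) ^ (n - 1))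
      = n * q ^ (n - 1) := by
    rw [hq, div_pow]
    field_simp
  rw [key]
  have : (n : ℝ) * q ^ (n - 1) ≤ n * (1 / (n : ℝ) ^ 3) := by
    apply mul_le_mul_of_nonneg_left _ (le_of_lt hn0)
    calc q ^ (n - 1) ≤ Real.exp (-((n - 1 : ℕ) / (m : ℝ))) := hqpow
      _ ≤ Real.exp (-(3 * Real.log n)) := hexp3
      _ = 1 / (n : ℝ) ^ 3 := hexplog
  calc (n : ℝ) * q ^ (n - 1) ≤ n * (1 / (n : ℝ) ^ 3) := this
    _ = 1 / (n : ℝ) ^ 2 := by field_simp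

lemma facts (n : ℕ) (hn : 576 ≤ n) :
    1 ≤ Real.log n ∧ 3 * (⌈(n : ℝ) / (4 * Real.log n)⌉₊ : ℝ) * Real.log n ≤ (n : ℝ) - 1 ∧
    1 ≤ ⌈(n : ℝ) / (4 * Real.log n)⌉₊ ∧ ⌈(n : ℝ) / (4 * Real.log n)⌉₊ ≤ n := by
  have hnR : (576 : ℝ) ≤ (n : ℝ) := by exact_mod_cast hn
  have hn0 : (0 : ℝ) < n := by linarith
  have hlog1 : 1 ≤ Real.log n := by
    have h1 : Real.exp 1 ≤ (n : ℝ) := by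
      have := Real.exp_one_lt_d9
      linarith
    calc (1 : ℝ) = Real.log (Real.exp 1) := (Real.log_exp 1).symm
      _ ≤ Real.log n := Real.log_le_log (Real.exp_pos 1) h1
  have hlog0 : 0 < Real.log n := by linarith
  have hsqrt : (24 : ℝ) ≤ Real.sqrt n := by
    rw [show (24 : ℝ) = Real.sqrt 576 by
      rw [show (576 : ℝ) = 24 ^ 2 by norm_num, Real.sqrt_sq]; norm_num]
    exact Real.sqrt_le_sqrt hnR
  have hsq : Real.sqrt n * Real.sqrt n = (n : ℝ) := Real.mul_self_sqrt (le_of_lt hn0)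
  have hlogle : Real.log n ≤ 2 * (Real.sqrt n - 1) := by
    have h1 : Real.log (Real.sqrt n) ≤ Real.sqrt n - 1 :=
      Real.log_le_sub_one_of_pos (by positivity)
    have h2 : Real.log (Real.sqrt n) = Real.log n / 2 := Real.log_sqrt (le_of_lt hn0)
    linarith
  have h24 : 24 * Real.sqrt n ≤ (n : ℝ) := by
    calc 24 * Real.sqrt n ≤ Real.sqrt n * Real.sqrt n := by nlinarith
      _ = (n : ℝ) := hsq
  have h12 : 12 * Real.log n + 4 ≤ (n : ℝ) := by nlinarith
  have hx0 : 0 < (n : ℝ) / (4 * Real.log n) := by positivity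
  have hceil : (⌈(n : ℝ) / (4 * Real.log n)⌉₊ : ℝ) < (n : ℝ) / (4 * Real.log n) + 1 :=
    Nat.ceil_lt_add_one (le_of_lt hx0)
  refine ⟨hlog1, ?_, Nat.one_le_ceil_iff.mpr hx0, Nat.ceil_le.mpr ?_⟩
  · have hdiv : (n : ℝ) / (4 * Real.log n) * Real.log n = n / 4 := by
      field_simp
    nlinarith [hceil, hlog0, mul_le_mul_of_nonneg_right hceil.le (le_of_lt hlog0)]
  · calc (n : ℝ) / (4 * Real.log n) ≤ (n : ℝ) / 1 :=
        div_le_div_of_nonneg_left (le_of_lt hn0) one_pos (by linarith)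
      _ = n := div_one _



/-- Throw `n` balls uniformly and independently into `⌈n/(4 ln n)⌉` bins,
`n ≥ 4` sufficiently large.  Any fixed bin contains exactly one ball with
probability at most `1/n²`, and by a union bound the probability that some
bin contains exactly one ball is `O(1/n)`. -/
theorem early_window_no_success :
    ∃ N : ℕ, ∃ C : ℝ, 0 < C ∧ ∀ n : ℕ, 4 ≤ n → N ≤ n →
      (∀ j : Fin ⌈(n : ℝ) / (4 * Real.log n)⌉₊,
        ((Finset.univ.filter
              (fun f : Fin n → Fin ⌈(n : ℝ) / (4 * Real.log n)⌉₊ =>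
                (Finset.univ.filter (fun i : Fin n => f i = j)).card = 1)).card : ℝ) /
            ((⌈(n : ℝ) / (4 * Real.log n)⌉₊ : ℕ) ^ n : ℕ) ≤ 1 / (n : ℝ) ^ 2) ∧
      ((Finset.univ.filter
            (fun f : Fin n → Fin ⌈(n : ℝ) / (4 * Real.log n)⌉₊ =>
              ∃ j : Fin ⌈(n : ℝ) / (4 * Real.log n)⌉₊,
                (Finset.univ.filter (fun i : Fin n => f i = j)).card = 1)).card : ℝ) /
          ((⌈(n : ℝ) / (4 * Real.log n)⌉₊ : ℕ) ^ n : ℕ) ≤ C / n := by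
  classical
  refine ⟨576, 1, one_pos, fun n hn4 hn576 => ?_⟩
  set m := ⌈(n : ℝ) / (4 * Real.log n)⌉₊ with hmdef
  obtain ⟨hlog1, h3, hm1, hmn⟩ := facts n hn576
  have hn1 : 1 ≤ n := by omega
  have hmn0 : (0 : ℝ) < ((m ^ n : ℕ) : ℝ) := by
    have : 0 < m ^ n := Nat.pow_pos hm1
    exact_mod_cast this
  have part1 : ∀ j : Fin m,
      ((Finset.univ.filter
          (fun f : Fin n → Fin m =>
            (Finset.univ.filter (fun i : Fin n => f i = j)).card = 1)).card : ℝ) /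
        ((m ^ n : ℕ) : ℝ) ≤ 1 / (n : ℝ) ^ 2 := by
    intro j
    calc ((Finset.univ.filter
          (fun f : Fin n → Fin m =>
            (Finset.univ.filter (fun i : Fin n => f i = j)).card = 1)).card : ℝ) /
        ((m ^ n : ℕ) : ℝ)
        ≤ ((n * (m * (m - 1) ^ (n - 1)) : ℕ) : ℝ) / ((m ^ n : ℕ) : ℝ) := by
          gcongr
          exact_mod_cast count_le n m j
      _ ≤ 1 / (n : ℝ) ^ 2 := analytic n m hm1 hn1 h3
  refine ⟨part1, ?_⟩
  have hsub : (Finset.univ.filter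
      (fun f : Fin n → Fin m =>
        ∃ j : Fin m, (Finset.univ.filter (fun i : Fin n => f i = j)).card = 1))
      ⊆ Finset.univ.biUnion (fun j : Fin m =>
        Finset.univ.filter (fun f : Fin n → Fin m =>
          (Finset.univ.filter (fun i : Fin n => f i = j)).card = 1)) := by
    intro f hf
    simp only [Finset.mem_filter, Finset.mem_univ, true_and] at hf
    obtain ⟨j, hj⟩ := hf
    simp only [Finset.mem_biUnion, Finset.mem_univ, true_and, Finset.mem_filter]
    exact ⟨j, hj⟩
  have hcard : ((Finset.univ.filter
      (fun f : Fin n → Fin m =>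
        ∃ j : Fin m, (Finset.univ.filter (fun i : Fin n => f i = j)).card = 1)).card : ℝ)
      ≤ ∑ j : Fin m, ((Finset.univ.filter
          (fun f : Fin n → Fin m =>
            (Finset.univ.filter (fun i : Fin n => f i = j)).card = 1)).card : ℝ) := by
    have h1 := Finset.card_le_card hsub
    have h2 := Finset.card_biUnion_le (s := (Finset.univ : Finset (Fin m)))
      (t := fun j : Fin m => Finset.univ.filter (fun f : Fin n → Fin m =>
        (Finset.univ.filter (fun i : Fin n => f i = j)).card = 1))
    exact_mod_cast le_trans h1 h2
  have hnR : (0 : ℝ) < n := by positivity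
  calc ((Finset.univ.filter
      (fun f : Fin n → Fin m =>
        ∃ j : Fin m, (Finset.univ.filter (fun i : Fin n => f i = j)).card = 1)).card : ℝ) /
      ((m ^ n : ℕ) : ℝ)
      ≤ (∑ j : Fin m, ((Finset.univ.filter
          (fun f : Fin n → Fin m =>
            (Finset.univ.filter (fun i : Fin n => f i = j)).card = 1)).card : ℝ)) /
        ((m ^ n : ℕ) : ℝ) := by gcongr
    _ = ∑ j : Fin m, ((Finset.univ.filter
          (fun f : Fin n → Fin m =>
            (Finset.univ.filter (fun i : Fin n => f i = j)).card = 1)).card : ℝ) /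
        ((m ^ n : ℕ) : ℝ) := Finset.sum_div _ _ _
    _ ≤ ∑ _j : Fin m, 1 / (n : ℝ) ^ 2 := Finset.sum_le_sum (fun j _ => part1 j)
    _ = m * (1 / (n : ℝ) ^ 2) := by simp [Finset.sum_const, Finset.card_univ]
    _ ≤ n * (1 / (n : ℝ) ^ 2) := by
        have : (m : ℝ) ≤ (n : ℝ) := by exact_mod_cast hmn
        have hp : (0:ℝ) ≤ 1 / (n : ℝ) ^ 2 := by positivity
        exact mul_le_mul_of_nonneg_right this hp
    _ = 1 / n := by field_simp
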